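/- Let ρ ∈ (−1,1), H = 0, and G₀(y) = log(1 + 2ρy + y²) + (2ρ/√(1−ρ²))·(arctan(ρ/√(1−ρ²)) − arctan((y+ρ)/√(1−ρ²))). Then G₀ satisfies the ODE (1/4)·G₀'(y)²·(y² + 2ρy + 1) = y·G₀'(y)/2 with G₀(0) = 0, i.e., the equation (1/4)G'(y)²·(y²/(2H+1)² + 2ρy/(2H+1) + 1) = (1−2H)·y·G'(y)/2 + 2H·G(y) with H = 0. -/

import Mathlib

/-- G₀(y) = log(1+2ρy+y²) + (2ρ/√(1−ρ²))·(arctan(ρ/√(1−ρ²)) − arctan((y+ρ)/√(1−ρ²)))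
satisfies (1/4)·G₀'(y)²·(y² + 2ρy + 1) = y·G₀'(y)/2 with G₀(0) = 0, which is the ODE
(1/4)G'²·(y²/(2H+1)² + 2ρy/(2H+1) + 1) = (1−2H)yG'/2 + 2HG for H = 0. -/
theorem sabr_G0_ode (ρ : ℝ) (hρ : ρ ∈ Set.Ioo (-1 : ℝ) 1) (G₀ : ℝ → ℝ)
    (hG₀ : ∀ y, G₀ y = Real.log (1 + 2 * ρ * y + y ^ 2) +
      (2 * ρ / Real.sqrt (1 - ρ ^ 2)) *
        (Real.arctan (ρ / Real.sqrt (1 - ρ ^ 2)) -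
          Real.arctan ((y + ρ) / Real.sqrt (1 - ρ ^ 2)))) :
    G₀ 0 = 0 ∧
    ∀ y : ℝ, (1 / 4) * (deriv G₀ y) ^ 2 * (y ^ 2 + 2 * ρ * y + 1) = y * deriv G₀ y / 2 := by
  obtain ⟨h1, h2⟩ := hρ
  have hs2 : (0:ℝ) < 1 - ρ ^ 2 := by nlinarith
  set s := Real.sqrt (1 - ρ ^ 2) with hs
  have hspos : 0 < s := Real.sqrt_pos.mpr hs2
  have hssq : s ^ 2 = 1 - ρ ^ 2 := Real.sq_sqrt hs2.le
  have hQ : ∀ y : ℝ, (0:ℝ) < 1 + 2 * ρ * y + y ^ 2 := by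
    intro y; nlinarith [sq_nonneg (y + ρ)]
  constructor
  · rw [hG₀]; simp
  · intro y
    have hQy := hQ y
    have hd : HasDerivAt G₀ (2 * y / (1 + 2 * ρ * y + y ^ 2)) y := by
      have hlog : HasDerivAt (fun x : ℝ => Real.log (1 + 2 * ρ * x + x ^ 2))
          ((2 * ρ + 2 * y) / (1 + 2 * ρ * y + y ^ 2)) y := by
        have hp : HasDerivAt (fun x : ℝ => 1 + 2 * ρ * x + x ^ 2) (2 * ρ + 2 * y) y := by
          have := ((hasDerivAt_id y).const_mul (2 * ρ)).const_add 1
          have h2' := (hasDerivAt_pow 2 y)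
          exact (this.add h2').congr_deriv (by simp)
        exact hp.log hQy.ne'
      have harc : HasDerivAt (fun x : ℝ => Real.arctan ((x + ρ) / s))
          (s / (1 + 2 * ρ * y + y ^ 2)) y := by
        have hin : HasDerivAt (fun x : ℝ => (x + ρ) / s) (1 / s) y := by
          simpa using ((hasDerivAt_id y).add_const ρ).div_const s
        have := hin.arctan
        convert this using 1
        have : 1 + ((y + ρ) / s) ^ 2 = (1 + 2 * ρ * y + y ^ 2) / s ^ 2 := by
          field_simp; nlinarith
        rw [this]
        field_simp
      have hfull : HasDerivAt (fun x : ℝ => Real.log (1 + 2 * ρ * x + x ^ 2) +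
          (2 * ρ / s) * (Real.arctan (ρ / s) - Real.arctan ((x + ρ) / s)))
          ((2 * ρ + 2 * y) / (1 + 2 * ρ * y + y ^ 2)
            + (2 * ρ / s) * (0 - s / (1 + 2 * ρ * y + y ^ 2))) y :=
        hlog.add (((hasDerivAt_const y _).sub harc).const_mul _)
      have heq : (fun x : ℝ => Real.log (1 + 2 * ρ * x + x ^ 2) +
          (2 * ρ / s) * (Real.arctan (ρ / s) - Real.arctan ((x + ρ) / s))) = G₀ := by
        funext x; rw [hG₀ x]
      rw [heq] at hfull
      convert hfull using 1
      field_simp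
      ring
    rw [hd.deriv]
    field_simp
    rw [div_eq_div_iff (pow_ne_zero 2 (by nlinarith)) (by nlinarith)]
    ring
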